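/- Fix c ≠ 0 and let (X,Y) solve X' = cXY, Y' = -cX² on [s₀,∞) with X(s₀)² + Y(s₀)² = ρ² > 0 and X(s₀) ≠ 0. Then lim_{s→∞} X(s) = 0 and lim_{s→∞} Y(s) = -ρ·sgn(c). -/

import Mathlib

open Filter

lemma aux10 (c s₀ ρ : ℝ) (hc : 0 < c) (hρ : 0 < ρ)
    (X Y : ℝ → ℝ)
    (hX : ∀ s ≥ s₀, HasDerivAt X (c * X s * Y s) s)
    (hY : ∀ s ≥ s₀, HasDerivAt Y (-c * X s ^ 2) s)
    (hX0 : X s₀ ≠ 0)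
    (hinit : X s₀ ^ 2 + Y s₀ ^ 2 = ρ ^ 2) :
    Tendsto X atTop (nhds 0) ∧ Tendsto Y atTop (nhds (-ρ)) := by
  -- energy derivative is zero
  have hE : ∀ s ≥ s₀, HasDerivAt (fun s => X s ^ 2 + Y s ^ 2) 0 s := by
    intro s hs
    have h := (((hX s hs).pow 2).add ((hY s hs).pow 2))
    refine h.congr_deriv ?_
    push_cast
    ring
  -- conservation
  have hcons : ∀ s ≥ s₀, X s ^ 2 + Y s ^ 2 = ρ ^ 2 := by
    intro s hs
    have key := constant_of_has_deriv_right_zero (f := fun s => X s ^ 2 + Y s ^ 2)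
      (a := s₀) (b := s)
      (fun x hx => (hE x hx.1).continuousAt.continuousWithinAt)
      (fun x hx => (hE x hx.1).hasDerivWithinAt)
      s ⟨hs, le_refl s⟩
    simpa [hinit] using key
  -- bounds on Y
  have hYlb : ∀ s ≥ s₀, -ρ ≤ Y s := by
    intro s hs
    nlinarith [hcons s hs, sq_nonneg (X s), sq_nonneg (Y s + ρ)]
  -- Y antitone on Ici s₀
  have hanti : AntitoneOn Y (Set.Ici s₀) := by
    apply antitoneOn_of_deriv_nonpos (convex_Ici s₀)
    · exact fun x hx => (hY x hx).continuousAt.continuousWithinAt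
    · intro x hx
      rw [interior_Ici] at hx
      exact ((hY x hx.le).differentiableAt).differentiableWithinAt
    · intro x hx
      rw [interior_Ici] at hx
      rw [(hY x hx.le).deriv]
      nlinarith [sq_nonneg (X x)]
  -- extended function
  set Z : ℝ → ℝ := fun s => Y (max s s₀) with hZ
  have hZanti : Antitone Z := by
    intro a b hab
    exact hanti (Set.mem_Ici.2 (le_max_right a s₀)) (Set.mem_Ici.2 (le_max_right b s₀))
      (max_le_max hab le_rfl)
  have hZbdd : BddBelow (Set.range Z) := by
    refine ⟨-ρ, ?_⟩
    rintro _ ⟨s, rfl⟩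
    exact hYlb _ (le_max_right s s₀)
  have hZten : Tendsto Z atTop (nhds (⨅ s, Z s)) := tendsto_atTop_ciInf hZanti hZbdd
  set L : ℝ := ⨅ s, Z s with hLdef
  have hEq : Y =ᶠ[atTop] Z := by
    filter_upwards [eventually_ge_atTop s₀] with s hs
    simp [hZ, max_eq_left hs]
  have hYten : Tendsto Y atTop (nhds L) := hZten.congr' hEq.symm
  -- L bounds
  have hLlb : -ρ ≤ L := ge_of_tendsto' hZten (fun s => hYlb _ (le_max_right s s₀))
  have hLleY : ∀ s ≥ s₀, L ≤ Y s := by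
    intro s hs
    have : L ≤ Z s := ciInf_le hZbdd s
    simpa [hZ, max_eq_left hs] using this
  have hY0lt : Y s₀ < ρ := by nlinarith [sq_nonneg (X s₀), sq_abs (X s₀), abs_pos.2 hX0, sq_nonneg (Y s₀ - ρ), sq_nonneg (Y s₀ + ρ)]
  -- claim L = -ρ
  have hLeq : L = -ρ := by
    by_contra hne
    have hLgt : -ρ < L := lt_of_le_of_ne hLlb (Ne.symm hne)
    -- uniform bound Y s ^ 2 ≤ m < ρ^2
    set m : ℝ := max (L ^ 2) (Y s₀ ^ 2) with hm
    have hmlt : m < ρ ^ 2 := by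
      have hLY : L ≤ Y s₀ := hLleY s₀ le_rfl
      have h1 : L ^ 2 < ρ ^ 2 := by nlinarith
      have h2 : Y s₀ ^ 2 < ρ ^ 2 := by nlinarith
      exact max_lt h1 h2
    set δ : ℝ := ρ ^ 2 - m with hδ
    have hδpos : 0 < δ := by simp [hδ]; linarith
    have hXlb : ∀ s ≥ s₀, δ ≤ X s ^ 2 := by
      intro s hs
      have hY2 : Y s ^ 2 ≤ m := by
        have h1 : L ≤ Y s := hLleY s hs
        have h2 : Y s ≤ Y s₀ := hanti (Set.mem_Ici.2 le_rfl) (Set.mem_Ici.2 hs) hs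
        have := abs_le_max_abs_abs h1 h2
        rcases le_total (|L|) (|Y s₀|) with h | h
        · have : |Y s| ≤ |Y s₀| := by simpa [max_eq_right h] using this
          calc Y s ^ 2 = |Y s| ^ 2 := (sq_abs _).symm
            _ ≤ |Y s₀| ^ 2 := by nlinarith [abs_nonneg (Y s)]
            _ = Y s₀ ^ 2 := sq_abs _
            _ ≤ m := le_max_right _ _
        · have : |Y s| ≤ |L| := by simpa [max_eq_left h] using this
          calc Y s ^ 2 = |Y s| ^ 2 := (sq_abs _).symm
            _ ≤ |L| ^ 2 := by nlinarith [abs_nonneg (Y s)]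
            _ = L ^ 2 := sq_abs _
            _ ≤ m := le_max_left _ _
      nlinarith [hcons s hs]
    -- g := Y + cδ·id is antitone
    have hganti : AntitoneOn (fun s => Y s + c * δ * s) (Set.Ici s₀) := by
      apply antitoneOn_of_deriv_nonpos (convex_Ici s₀)
      · exact fun x hx =>
          (((hY x hx).add ((hasDerivAt_id x).const_mul (c * δ)))).continuousAt.continuousWithinAt
      · intro x hx
        rw [interior_Ici] at hx
        exact (((hY x hx.le).add ((hasDerivAt_id x).const_mul (c * δ)))).differentiableAt.differentiableWithinAt
      · intro x hx
        rw [interior_Ici] at hx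
        have hd : HasDerivAt (fun s => Y s + c * δ * s) (-c * X x ^ 2 + c * δ) x := by
          simpa [Pi.add_def, id_eq, mul_one] using ((hY x hx.le).add ((hasDerivAt_id x).const_mul (c * δ)))
        rw [hd.deriv]
        have := hXlb x hx.le
        nlinarith
    -- contradiction at large s
    set s₁ : ℝ := s₀ + (Y s₀ + ρ) / (c * δ) + 1 with hs₁
    have hcδ : 0 < c * δ := by positivity
    have hnum : 0 ≤ Y s₀ + ρ := by have := hYlb s₀ le_rfl; linarith
    have hs₁ge : s₀ ≤ s₁ := by
      have : 0 ≤ (Y s₀ + ρ) / (c * δ) := div_nonneg hnum hcδ.le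
      simp only [hs₁]; linarith
    have hkey := hganti (Set.mem_Ici.2 le_rfl) (Set.mem_Ici.2 hs₁ge) hs₁ge
    have hYs₁ := hYlb s₁ hs₁ge
    have hexp : c * δ * s₁ = c * δ * s₀ + (Y s₀ + ρ) + c * δ := by
      have h2 : (Y s₀ + ρ) / (c * δ) * (c * δ) = Y s₀ + ρ := div_mul_cancel₀ _ hcδ.ne'
      simp only [hs₁]
      linear_combination h2
    simp only at hkey
    linarith [hkey, hYs₁, hexp, hρ, hcδ]
  -- conclude Y
  rw [hLeq] at hYten
  refine ⟨?_, hYten⟩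
  -- X² → 0
  have hX2 : Tendsto (fun s => X s ^ 2) atTop (nhds 0) := by
    have h1 : Tendsto (fun s => ρ ^ 2 - Y s ^ 2) atTop (nhds 0) := by
      have := ((hYten.pow 2)).const_sub (ρ ^ 2)
      simpa using this
    apply h1.congr'
    filter_upwards [eventually_ge_atTop s₀] with s hs
    have := hcons s hs
    linarith
  have habs : Tendsto (fun s => |X s|) atTop (nhds 0) := by
    have := hX2.sqrt
    simpa [Real.sqrt_sq_eq_abs] using this
  exact (tendsto_zero_iff_abs_tendsto_zero X).mpr habs

theorem stmt10 (c s₀ ρ : ℝ) (hc : c ≠ 0) (hρ : 0 < ρ)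
    (X Y : ℝ → ℝ)
    (hX : ∀ s ≥ s₀, HasDerivAt X (c * X s * Y s) s)
    (hY : ∀ s ≥ s₀, HasDerivAt Y (-c * X s ^ 2) s)
    (hX0 : X s₀ ≠ 0)
    (hinit : X s₀ ^ 2 + Y s₀ ^ 2 = ρ ^ 2) :
    Tendsto X atTop (nhds 0) ∧ Tendsto Y atTop (nhds (-ρ * Real.sign c)) := by
  rcases hc.lt_or_gt with hneg | hpos
  · -- apply aux to -c, -Y
    have h := aux10 (-c) s₀ ρ (by linarith) hρ X (fun s => -Y s)
      (fun s hs => by convert hX s hs using 1; ring)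
      (fun s hs => by refine (hY s hs).neg.congr_deriv ?_; ring)
      hX0 (by simpa using hinit)
    rw [Real.sign_of_neg hneg]
    refine ⟨h.1, ?_⟩
    have := h.2.neg
    simpa using this
  · have h := aux10 c s₀ ρ hpos hρ X Y hX hY hX0 hinit
    rw [Real.sign_of_pos hpos]
    simpa using h
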